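/- Let ℘ : ℝ² → ℝ be C¹ with x₁² + x₂² + ℘(x₁,x₂)² > 0 for all (x₁,x₂), and ς ∈ ℝ. Define ψ : ℝ⁶ → ℝ⁶ by ψ(x₁,x₂,x₃,w₁,w₂,w₃) = (x₁, x₂, −x₁x₃+x₂w₁−℘w₂, −x₂x₃−x₁w₁−℘w₃, ℘(x₃−ς)−x₁w₂−x₂w₃, ℘w₁+x₂w₂−x₁w₃) where ℘ = ℘(x₁,x₂). Then the Jacobian of ψ has determinant (x₁²+x₂²+℘(x₁,x₂)²)², hence nonzero everywhere, and ψ is a bijective diffeomorphism from ℝ⁶ onto ℝ⁶. -/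

import Mathlib

set_option maxRecDepth 8000
set_option maxHeartbeats 1600000

theorem aux_det17 (a b p c20 c21 c30 c31 c40 c41 c50 c51 : ℝ) :
    Matrix.det !![1,0,0,0,0,0; 0,1,0,0,0,0;
      c20,c21,-a,b,-p,0; c30,c31,-b,-a,0,-p;
      c40,c41,p,0,-a,-b; c50,c51,0,p,b,-a]
    = (a^2+b^2+p^2)^2 := by
  have e1 : (Fin.succAbove (1 : Fin 4) (2 : Fin 3)) = 3 := by decide
  have e2 : (Fin.succAbove (2 : Fin 4) (2 : Fin 3)) = 3 := by decide
  simp [Matrix.det_succ_row_zero, Fin.sum_univ_succ, e1, e2]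
  ring

theorem aux17_deriv (℘ : ℝ → ℝ → ℝ)
    (h℘C : ContDiff ℝ 1 (fun p : ℝ × ℝ => ℘ p.1 p.2)) (ς : ℝ) (x : Fin 6 → ℝ) :
    ∃ D : (Fin 6 → ℝ) →L[ℝ] (Fin 6 → ℝ),
      HasFDerivAt (fun y : Fin 6 → ℝ =>
        ![y 0, y 1,
          -(y 0 * y 2) + y 1 * y 3 - ℘ (y 0) (y 1) * y 4,
          -(y 1 * y 2) - y 0 * y 3 - ℘ (y 0) (y 1) * y 5,
          ℘ (y 0) (y 1) * (y 2 - ς) - y 0 * y 4 - y 1 * y 5,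
          ℘ (y 0) (y 1) * y 3 + y 1 * y 4 - y 0 * y 5]) D x ∧
      LinearMap.det (D : (Fin 6 → ℝ) →ₗ[ℝ] (Fin 6 → ℝ))
        = ((x 0) ^ 2 + (x 1) ^ 2 + (℘ (x 0) (x 1)) ^ 2) ^ 2 := by
  classical
  set P : ℝ × ℝ → ℝ := fun q => ℘ q.1 q.2 with hPdef
  set d0 : ℝ := fderiv ℝ P (x 0, x 1) (1, 0) with hd0
  set d1 : ℝ := fderiv ℝ P (x 0, x 1) (0, 1) with hd1
  set p : ℝ := ℘ (x 0) (x 1) with hp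
  set J : Matrix (Fin 6) (Fin 6) ℝ :=
    !![1,0,0,0,0,0; 0,1,0,0,0,0;
       -(x 2) - d0 * x 4, x 3 - d1 * x 4, -(x 0), x 1, -p, 0;
       -(x 3) - d0 * x 5, -(x 2) - d1 * x 5, -(x 1), -(x 0), 0, -p;
       d0 * (x 2 - ς) - x 4, d1 * (x 2 - ς) - x 5, p, 0, -(x 0), -(x 1);
       d0 * x 3 - x 5, d1 * x 3 + x 4, 0, p, x 1, -(x 0)] with hJ
  set D : (Fin 6 → ℝ) →L[ℝ] (Fin 6 → ℝ) :=
    LinearMap.toContinuousLinearMap (Matrix.toLin' J) with hD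
  have hDapp : ∀ (h : Fin 6 → ℝ) (i : Fin 6), D h i = ∑ j, J i j * h j := by
    intro h i
    simp [hD, Matrix.toLin'_apply, Matrix.mulVec, dotProduct]
  have hPd : HasFDerivAt P (fderiv ℝ P (x 0, x 1)) (x 0, x 1) :=
    ((h℘C.differentiable one_ne_zero) (x 0, x 1)).hasFDerivAt
  set Lpr : (Fin 6 → ℝ) →L[ℝ] ℝ × ℝ :=
    (ContinuousLinearMap.proj (R := ℝ) (φ := fun _ : Fin 6 => ℝ) (0 : Fin 6)).prod
      (ContinuousLinearMap.proj (1 : Fin 6)) with hLprdef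
  have hLpr : HasFDerivAt (fun y : Fin 6 → ℝ => ((y 0 : ℝ), (y 1 : ℝ))) Lpr x :=
    Lpr.hasFDerivAt
  have hpder : HasFDerivAt (fun y : Fin 6 → ℝ => ℘ (y 0) (y 1))
      ((fderiv ℝ P (x 0, x 1)).comp Lpr) x :=
    HasFDerivAt.comp (g := P) x hPd hLpr
  have hdP : ∀ h : Fin 6 → ℝ, fderiv ℝ P (x 0, x 1) (h 0, h 1) = h 0 * d0 + h 1 * d1 := by
    intro h
    have e : ((h 0 : ℝ), (h 1 : ℝ)) = h 0 • ((1:ℝ), (0:ℝ)) + h 1 • ((0:ℝ), (1:ℝ)) := by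
      simp [Prod.ext_iff]
    rw [e, map_add, map_smul, map_smul, hd0, hd1, smul_eq_mul, smul_eq_mul]
  have hproj : ∀ i : Fin 6, HasFDerivAt (fun y : Fin 6 → ℝ => y i)
      (ContinuousLinearMap.proj (R := ℝ) (φ := fun _ : Fin 6 => ℝ) i) x :=
    fun i => (ContinuousLinearMap.proj (R := ℝ) (φ := fun _ : Fin 6 => ℝ) i).hasFDerivAt
  have n1_2 : (1 : Fin 2) = Fin.succ (0 : Fin 1) := rfl
  have n1_3 : (1 : Fin 3) = Fin.succ (0 : Fin 2) := rfl
  have n2_3 : (2 : Fin 3) = Fin.succ (1 : Fin 2) := rfl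
  have n1_4 : (1 : Fin 4) = Fin.succ (0 : Fin 3) := rfl
  have n2_4 : (2 : Fin 4) = Fin.succ (1 : Fin 3) := rfl
  have n3_4 : (3 : Fin 4) = Fin.succ (2 : Fin 3) := rfl
  have n1_5 : (1 : Fin 5) = Fin.succ (0 : Fin 4) := rfl
  have n2_5 : (2 : Fin 5) = Fin.succ (1 : Fin 4) := rfl
  have n3_5 : (3 : Fin 5) = Fin.succ (2 : Fin 4) := rfl
  have n4_5 : (4 : Fin 5) = Fin.succ (3 : Fin 4) := rfl
  have n1_6 : (1 : Fin 6) = Fin.succ (0 : Fin 5) := rfl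
  have n2_6 : (2 : Fin 6) = Fin.succ (1 : Fin 5) := rfl
  have n3_6 : (3 : Fin 6) = Fin.succ (2 : Fin 5) := rfl
  have n4_6 : (4 : Fin 6) = Fin.succ (3 : Fin 5) := rfl
  have n5_6 : (5 : Fin 6) = Fin.succ (4 : Fin 5) := rfl
  have hdP' : ∀ h : Fin 6 → ℝ,
      fderiv ℝ P (x 0, x (Fin.succ 0)) (h 0, h (Fin.succ 0)) = h 0 * d0 + h (Fin.succ 0) * d1 :=
    hdP
  refine ⟨D, ?_, ?_⟩
  · apply hasFDerivAt_pi''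
    intro i
    fin_cases i
    · refine (hproj 0).congr_fderiv ?_
      ext h
      simp [hDapp, hJ, Fin.sum_univ_succ, n1_2, n1_3, n2_3, n1_4, n2_4, n3_4, n1_5, n2_5, n3_5, n4_5, n1_6, n2_6, n3_6, n4_6, n5_6, Matrix.cons_val_succ, Matrix.cons_val_zero, -Fin.succ_zero_eq_one', -Fin.succ_one_eq_two', -Fin.succ_zero_eq_one, -Fin.succ_one_eq_two]
    · refine (hproj 1).congr_fderiv ?_
      ext h
      simp [hDapp, hJ, Fin.sum_univ_succ, n1_2, n1_3, n2_3, n1_4, n2_4, n3_4, n1_5, n2_5, n3_5, n4_5, n1_6, n2_6, n3_6, n4_6, n5_6, Matrix.cons_val_succ, Matrix.cons_val_zero, -Fin.succ_zero_eq_one', -Fin.succ_one_eq_two', -Fin.succ_zero_eq_one, -Fin.succ_one_eq_two]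
    · refine ((((hproj 0).mul (hproj 2)).neg.add ((hproj 1).mul (hproj 3))).sub
        (hpder.mul (hproj 4))).congr_fderiv ?_
      ext h
      simp [hDapp, hJ, Fin.sum_univ_succ, hLprdef, hdP, hdP', hp, n1_2, n1_3, n2_3, n1_4, n2_4, n3_4, n1_5, n2_5, n3_5, n4_5, n1_6, n2_6, n3_6, n4_6, n5_6, Matrix.cons_val_succ, Matrix.cons_val_zero, -Fin.succ_zero_eq_one', -Fin.succ_one_eq_two', -Fin.succ_zero_eq_one, -Fin.succ_one_eq_two]
      ring
    · refine ((((hproj 1).mul (hproj 2)).neg.sub ((hproj 0).mul (hproj 3))).sub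
        (hpder.mul (hproj 5))).congr_fderiv ?_
      ext h
      simp [hDapp, hJ, Fin.sum_univ_succ, hLprdef, hdP, hdP', hp, n1_2, n1_3, n2_3, n1_4, n2_4, n3_4, n1_5, n2_5, n3_5, n4_5, n1_6, n2_6, n3_6, n4_6, n5_6, Matrix.cons_val_succ, Matrix.cons_val_zero, -Fin.succ_zero_eq_one', -Fin.succ_one_eq_two', -Fin.succ_zero_eq_one, -Fin.succ_one_eq_two]
      ring
    · refine (((hpder.mul ((hproj 2).sub_const ς)).sub ((hproj 0).mul (hproj 4))).sub
        ((hproj 1).mul (hproj 5))).congr_fderiv ?_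
      ext h
      simp [hDapp, hJ, Fin.sum_univ_succ, hLprdef, hdP, hdP', hp, n1_2, n1_3, n2_3, n1_4, n2_4, n3_4, n1_5, n2_5, n3_5, n4_5, n1_6, n2_6, n3_6, n4_6, n5_6, Matrix.cons_val_succ, Matrix.cons_val_zero, -Fin.succ_zero_eq_one', -Fin.succ_one_eq_two', -Fin.succ_zero_eq_one, -Fin.succ_one_eq_two]
      ring
    · refine (((hpder.mul (hproj 3)).add ((hproj 1).mul (hproj 4))).sub
        ((hproj 0).mul (hproj 5))).congr_fderiv ?_
      ext h
      simp [hDapp, hJ, Fin.sum_univ_succ, hLprdef, hdP, hdP', hp, n1_2, n1_3, n2_3, n1_4, n2_4, n3_4, n1_5, n2_5, n3_5, n4_5, n1_6, n2_6, n3_6, n4_6, n5_6, Matrix.cons_val_succ, Matrix.cons_val_zero, -Fin.succ_zero_eq_one', -Fin.succ_one_eq_two', -Fin.succ_zero_eq_one, -Fin.succ_one_eq_two]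
      ring
  · have hc : (D : (Fin 6 → ℝ) →ₗ[ℝ] (Fin 6 → ℝ)) = Matrix.toLin' J :=
      LinearMap.coe_toContinuousLinearMap _
    rw [hc, LinearMap.det_toLin', hJ, aux_det17]

/-- The augmented map ψ on ℝ⁶ has Jacobian determinant
(x₁² + x₂² + ℘(x₁,x₂)²)², hence nonzero everywhere, and ψ is a bijective
diffeomorphism from ℝ⁶ onto ℝ⁶. -/
theorem stmt_17 (℘ : ℝ → ℝ → ℝ)
    (h℘C : ContDiff ℝ 1 (fun p : ℝ × ℝ => ℘ p.1 p.2))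
    (h℘pos : ∀ x₁ x₂, 0 < x₁ ^ 2 + x₂ ^ 2 + (℘ x₁ x₂) ^ 2)
    (ς : ℝ) :
    let ψ : EuclideanSpace ℝ (Fin 6) → EuclideanSpace ℝ (Fin 6) :=
      fun x => (WithLp.equiv 2 (Fin 6 → ℝ)).symm
        ![x 0, x 1,
          -(x 0 * x 2) + x 1 * x 3 - ℘ (x 0) (x 1) * x 4,
          -(x 1 * x 2) - x 0 * x 3 - ℘ (x 0) (x 1) * x 5,
          ℘ (x 0) (x 1) * (x 2 - ς) - x 0 * x 4 - x 1 * x 5,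
          ℘ (x 0) (x 1) * x 3 + x 1 * x 4 - x 0 * x 5]
    (∀ x, LinearMap.det ((fderiv ℝ ψ x : _) :
        EuclideanSpace ℝ (Fin 6) →ₗ[ℝ] EuclideanSpace ℝ (Fin 6))
      = ((x 0) ^ 2 + (x 1) ^ 2 + (℘ (x 0) (x 1)) ^ 2) ^ 2) ∧
    Function.Bijective ψ ∧
    ∃ g : EuclideanSpace ℝ (Fin 6) → EuclideanSpace ℝ (Fin 6),
      ContDiff ℝ 1 g ∧ Function.LeftInverse g ψ ∧ Function.RightInverse g ψ := by
  classical
  intro ψ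
  set P : ℝ × ℝ → ℝ := fun q => ℘ q.1 q.2 with hPdef
  have hNne : ∀ a b : ℝ, a ^ 2 + b ^ 2 + (℘ a b) ^ 2 ≠ 0 :=
    fun a b => ne_of_gt (h℘pos a b)
  -- explicit inverse map
  set g : EuclideanSpace ℝ (Fin 6) → EuclideanSpace ℝ (Fin 6) := fun ξ =>
    (WithLp.equiv 2 (Fin 6 → ℝ)).symm
      ![ξ 0, ξ 1,
        (-(ξ 0 * ξ 2) - ξ 1 * ξ 3 + ℘ (ξ 0) (ξ 1) * (ξ 4 + ℘ (ξ 0) (ξ 1) * ς)) /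
          ((ξ 0) ^ 2 + (ξ 1) ^ 2 + (℘ (ξ 0) (ξ 1)) ^ 2),
        (ξ 1 * ξ 2 - ξ 0 * ξ 3 + ℘ (ξ 0) (ξ 1) * ξ 5) /
          ((ξ 0) ^ 2 + (ξ 1) ^ 2 + (℘ (ξ 0) (ξ 1)) ^ 2),
        (-(℘ (ξ 0) (ξ 1) * ξ 2) - ξ 0 * (ξ 4 + ℘ (ξ 0) (ξ 1) * ς) + ξ 1 * ξ 5) /
          ((ξ 0) ^ 2 + (ξ 1) ^ 2 + (℘ (ξ 0) (ξ 1)) ^ 2),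
        (-(℘ (ξ 0) (ξ 1) * ξ 3) - ξ 1 * (ξ 4 + ℘ (ξ 0) (ξ 1) * ς) - ξ 0 * ξ 5) /
          ((ξ 0) ^ 2 + (ξ 1) ^ 2 + (℘ (ξ 0) (ξ 1)) ^ 2)] with hgdef
  -- component formulas, all definitional
  have hψ0 : ∀ x : EuclideanSpace ℝ (Fin 6), ψ x 0 = x 0 := fun _ => rfl
  have hψ1 : ∀ x : EuclideanSpace ℝ (Fin 6), ψ x 1 = x 1 := fun _ => rfl
  have hψ2 : ∀ x : EuclideanSpace ℝ (Fin 6), ψ x 2 = -(x 0 * x 2) + x 1 * x 3 - ℘ (x 0) (x 1) * x 4 := fun _ => rfl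
  have hψ3 : ∀ x : EuclideanSpace ℝ (Fin 6), ψ x 3 = -(x 1 * x 2) - x 0 * x 3 - ℘ (x 0) (x 1) * x 5 := fun _ => rfl
  have hψ4 : ∀ x : EuclideanSpace ℝ (Fin 6), ψ x 4 = ℘ (x 0) (x 1) * (x 2 - ς) - x 0 * x 4 - x 1 * x 5 := fun _ => rfl
  have hψ5 : ∀ x : EuclideanSpace ℝ (Fin 6), ψ x 5 = ℘ (x 0) (x 1) * x 3 + x 1 * x 4 - x 0 * x 5 := fun _ => rfl
  have hg0 : ∀ ξ : EuclideanSpace ℝ (Fin 6), g ξ 0 = ξ 0 := fun _ => rfl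
  have hg1 : ∀ ξ : EuclideanSpace ℝ (Fin 6), g ξ 1 = ξ 1 := fun _ => rfl
  have hg2 : ∀ ξ : EuclideanSpace ℝ (Fin 6), g ξ 2 =
      (-(ξ 0 * ξ 2) - ξ 1 * ξ 3 + ℘ (ξ 0) (ξ 1) * (ξ 4 + ℘ (ξ 0) (ξ 1) * ς)) /
        ((ξ 0) ^ 2 + (ξ 1) ^ 2 + (℘ (ξ 0) (ξ 1)) ^ 2) := fun _ => rfl
  have hg3 : ∀ ξ : EuclideanSpace ℝ (Fin 6), g ξ 3 =
      (ξ 1 * ξ 2 - ξ 0 * ξ 3 + ℘ (ξ 0) (ξ 1) * ξ 5) /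
        ((ξ 0) ^ 2 + (ξ 1) ^ 2 + (℘ (ξ 0) (ξ 1)) ^ 2) := fun _ => rfl
  have hg4 : ∀ ξ : EuclideanSpace ℝ (Fin 6), g ξ 4 =
      (-(℘ (ξ 0) (ξ 1) * ξ 2) - ξ 0 * (ξ 4 + ℘ (ξ 0) (ξ 1) * ς) + ξ 1 * ξ 5) /
        ((ξ 0) ^ 2 + (ξ 1) ^ 2 + (℘ (ξ 0) (ξ 1)) ^ 2) := fun _ => rfl
  have hg5 : ∀ ξ : EuclideanSpace ℝ (Fin 6), g ξ 5 =
      (-(℘ (ξ 0) (ξ 1) * ξ 3) - ξ 1 * (ξ 4 + ℘ (ξ 0) (ξ 1) * ς) - ξ 0 * ξ 5) /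
        ((ξ 0) ^ 2 + (ξ 1) ^ 2 + (℘ (ξ 0) (ξ 1)) ^ 2) := fun _ => rfl
  have hleft : Function.LeftInverse g ψ := by
    intro x
    ext i
    fin_cases i
    · show g (ψ x) 0 = x 0
      rw [hg0, hψ0]
    · show g (ψ x) 1 = x 1
      rw [hg1, hψ1]
    · have hN := hNne (x 0) (x 1)
      show g (ψ x) 2 = x 2
      simp only [hg2, hψ0, hψ1, hψ2, hψ3, hψ4, hψ5]
      field_simp
      ring
    · have hN := hNne (x 0) (x 1)
      show g (ψ x) 3 = x 3
      simp only [hg3, hψ0, hψ1, hψ2, hψ3, hψ4, hψ5]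
      field_simp
      ring
    · have hN := hNne (x 0) (x 1)
      show g (ψ x) 4 = x 4
      simp only [hg4, hψ0, hψ1, hψ2, hψ3, hψ4, hψ5]
      field_simp
      ring
    · have hN := hNne (x 0) (x 1)
      show g (ψ x) 5 = x 5
      simp only [hg5, hψ0, hψ1, hψ2, hψ3, hψ4, hψ5]
      field_simp
      ring
  have hright : Function.RightInverse g ψ := by
    intro ξ
    ext i
    fin_cases i
    · show ψ (g ξ) 0 = ξ 0
      rw [hψ0, hg0]
    · show ψ (g ξ) 1 = ξ 1
      rw [hψ1, hg1]
    · have hN := hNne (ξ 0) (ξ 1)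
      show ψ (g ξ) 2 = ξ 2
      simp only [hψ2, hg0, hg1, hg2, hg3, hg4, hg5]
      field_simp
      ring
    · have hN := hNne (ξ 0) (ξ 1)
      show ψ (g ξ) 3 = ξ 3
      simp only [hψ3, hg0, hg1, hg2, hg3, hg4, hg5]
      field_simp
      ring
    · have hN := hNne (ξ 0) (ξ 1)
      show ψ (g ξ) 4 = ξ 4
      simp only [hψ4, hg0, hg1, hg2, hg3, hg4, hg5]
      field_simp
      ring
    · have hN := hNne (ξ 0) (ξ 1)
      show ψ (g ξ) 5 = ξ 5
      simp only [hψ5, hg0, hg1, hg2, hg3, hg4, hg5]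
      field_simp
      ring
  have hcoord : ∀ i : Fin 6, ContDiff ℝ 1 (fun ξ : EuclideanSpace ℝ (Fin 6) => ξ i) :=
    fun i => (EuclideanSpace.proj (𝕜 := ℝ) (ι := Fin 6) i).contDiff
  have hpC : ContDiff ℝ 1 (fun ξ : EuclideanSpace ℝ (Fin 6) => ℘ (ξ 0) (ξ 1)) :=
    by have := h℘C.comp (ContDiff.prodMk (hcoord 0) (hcoord 1)); exact this
  have hden : ContDiff ℝ 1 (fun ξ : EuclideanSpace ℝ (Fin 6) => (ξ 0) ^ 2 + (ξ 1) ^ 2 + (℘ (ξ 0) (ξ 1)) ^ 2) :=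
    (((hcoord 0).pow 2).add ((hcoord 1).pow 2)).add (hpC.pow 2)
  have hgC : ContDiff ℝ 1 g := by
    apply contDiff_euclidean.mpr
    intro i
    fin_cases i
    · show ContDiff ℝ 1 (fun ξ : EuclideanSpace ℝ (Fin 6) => ξ 0); exact hcoord 0
    · show ContDiff ℝ 1 (fun ξ : EuclideanSpace ℝ (Fin 6) => ξ 1); exact hcoord 1
    · show ContDiff ℝ 1 (fun ξ : EuclideanSpace ℝ (Fin 6) =>
        (-(ξ 0 * ξ 2) - ξ 1 * ξ 3 + ℘ (ξ 0) (ξ 1) * (ξ 4 + ℘ (ξ 0) (ξ 1) * ς)) /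
          ((ξ 0) ^ 2 + (ξ 1) ^ 2 + (℘ (ξ 0) (ξ 1)) ^ 2))
      exact ContDiff.div
        ((((hcoord 0).mul (hcoord 2)).neg.sub ((hcoord 1).mul (hcoord 3))).add
          (hpC.mul ((hcoord 4).add (hpC.mul contDiff_const))))
        hden (fun ξ => hNne (ξ 0) (ξ 1))
    · show ContDiff ℝ 1 (fun ξ : EuclideanSpace ℝ (Fin 6) =>
        (ξ 1 * ξ 2 - ξ 0 * ξ 3 + ℘ (ξ 0) (ξ 1) * ξ 5) /
          ((ξ 0) ^ 2 + (ξ 1) ^ 2 + (℘ (ξ 0) (ξ 1)) ^ 2))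
      exact ContDiff.div
        ((((hcoord 1).mul (hcoord 2)).sub ((hcoord 0).mul (hcoord 3))).add
          (hpC.mul (hcoord 5)))
        hden (fun ξ => hNne (ξ 0) (ξ 1))
    · show ContDiff ℝ 1 (fun ξ : EuclideanSpace ℝ (Fin 6) =>
        (-(℘ (ξ 0) (ξ 1) * ξ 2) - ξ 0 * (ξ 4 + ℘ (ξ 0) (ξ 1) * ς) + ξ 1 * ξ 5) /
          ((ξ 0) ^ 2 + (ξ 1) ^ 2 + (℘ (ξ 0) (ξ 1)) ^ 2))
      exact ContDiff.div
        ((((hpC.mul (hcoord 2)).neg.sub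
            ((hcoord 0).mul ((hcoord 4).add (hpC.mul contDiff_const)))).add
          ((hcoord 1).mul (hcoord 5))))
        hden (fun ξ => hNne (ξ 0) (ξ 1))
    · show ContDiff ℝ 1 (fun ξ : EuclideanSpace ℝ (Fin 6) =>
        (-(℘ (ξ 0) (ξ 1) * ξ 3) - ξ 1 * (ξ 4 + ℘ (ξ 0) (ξ 1) * ς) - ξ 0 * ξ 5) /
          ((ξ 0) ^ 2 + (ξ 1) ^ 2 + (℘ (ξ 0) (ξ 1)) ^ 2))
      exact ContDiff.div
        ((((hpC.mul (hcoord 3)).neg.sub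
            ((hcoord 1).mul ((hcoord 4).add (hpC.mul contDiff_const)))).sub
          ((hcoord 0).mul (hcoord 5))))
        hden (fun ξ => hNne (ξ 0) (ξ 1))
  refine ⟨?_, Function.bijective_iff_has_inverse.mpr ⟨g, hleft, hright⟩, g, hgC, hleft, hright⟩
  -- the determinant computation
  intro x
  set eL : EuclideanSpace ℝ (Fin 6) ≃L[ℝ] (Fin 6 → ℝ) :=
    PiLp.continuousLinearEquiv 2 ℝ (fun _ : Fin 6 => ℝ) with heL
  obtain ⟨D, hF, hdet⟩ := aux17_deriv ℘ h℘C ς (eL x)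
  have hψd : HasFDerivAt ψ
      ((eL.symm.toContinuousLinearMap).comp (D.comp eL.toContinuousLinearMap)) x :=
    (eL.symm.toContinuousLinearMap.hasFDerivAt).comp x
      (hF.comp x (eL.toContinuousLinearMap.hasFDerivAt))
  rw [hψd.fderiv]
  have hcoe : (((eL.symm.toContinuousLinearMap).comp (D.comp eL.toContinuousLinearMap) :
        EuclideanSpace ℝ (Fin 6) →L[ℝ] EuclideanSpace ℝ (Fin 6)) :
        EuclideanSpace ℝ (Fin 6) →ₗ[ℝ] EuclideanSpace ℝ (Fin 6))
      = (eL.toLinearEquiv.symm : (Fin 6 → ℝ) →ₗ[ℝ] EuclideanSpace ℝ (Fin 6)) ∘ₗ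
          ((D : (Fin 6 → ℝ) →ₗ[ℝ] (Fin 6 → ℝ)) ∘ₗ
            (eL.toLinearEquiv.symm.symm : EuclideanSpace ℝ (Fin 6) →ₗ[ℝ] (Fin 6 → ℝ))) := rfl
  rw [hcoe]
  rw [← LinearMap.comp_assoc, LinearMap.comp_assoc]
  rw [LinearMap.det_conj (D : (Fin 6 → ℝ) →ₗ[ℝ] (Fin 6 → ℝ)) eL.toLinearEquiv.symm]
  exact hdet
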